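/- Let X be a binary string, let X = X_1 X_2 ⋯ X_ℓ be an arbitrary partition of X into ℓ consecutive blocks, and let X = X^b_1 X^b_2 ⋯ X^b_m be a partition of X into m consecutive blocks each of length at most b. Then ∑_{i=1}^{m} |X^b_i|·H_0(X^b_i) ≤ ∑_{i=1}^{ℓ} |X_i|·H_0(X_i) + (ℓ − 1)·b. -/

import Mathlib

/-- The 0-th order empirical entropy of a binary string `Y` of length `t`
containing `x` ones: `H₀(Y) = (x/t)·log₂(t/x) + ((t−x)/t)·log₂(t/(t−x))`
(the conventions `0·log₂(y/0) = 0` and `H₀(ε) = 0` hold automatically). -/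
noncomputable def binH0 (Y : List Bool) : ℝ :=
  ((Y.count true : ℝ) / (Y.length : ℝ)) *
      Real.logb 2 ((Y.length : ℝ) / (Y.count true : ℝ)) +
    (((Y.length : ℝ) - (Y.count true : ℝ)) / (Y.length : ℝ)) *
      Real.logb 2 ((Y.length : ℝ) / ((Y.length : ℝ) - (Y.count true : ℝ)))

namespace BinH0Aux

/-- Two-term log-sum inequality (in the `x·log(t/x)` superadditive form). -/
lemma logsum {x₁ t₁ x₂ t₂ : ℝ} (h0 : 0 ≤ x₁) (h1 : x₁ ≤ t₁) (h2 : 0 ≤ x₂) (h3 : x₂ ≤ t₂) :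
    x₁ * Real.log (t₁ / x₁) + x₂ * Real.log (t₂ / x₂) ≤
      (x₁ + x₂) * Real.log ((t₁ + t₂) / (x₁ + x₂)) := by
  rcases eq_or_lt_of_le (h0.trans h1) with ht1 | ht1
  · have hx1 : x₁ = 0 := le_antisymm (h1.trans ht1.symm.le) h0
    subst hx1; rw [← ht1]; simp
  rcases eq_or_lt_of_le (h2.trans h3) with ht2 | ht2
  · have hx2 : x₂ = 0 := le_antisymm (h3.trans ht2.symm.le) h2
    subst hx2; rw [← ht2]; simp
  have hT : (0:ℝ) < t₁ + t₂ := by linarith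
  have hc := Real.convexOn_mul_log.2 (Set.mem_Ici.mpr (div_nonneg h0 ht1.le))
      (Set.mem_Ici.mpr (div_nonneg h2 ht2.le))
      (div_nonneg ht1.le hT.le) (div_nonneg ht2.le hT.le)
      (by field_simp)
  simp only [smul_eq_mul] at hc
  have hpt : t₁ / (t₁ + t₂) * (x₁ / t₁) + t₂ / (t₁ + t₂) * (x₂ / t₂) = (x₁ + x₂) / (t₁ + t₂) := by
    field_simp
  rw [hpt] at hc
  have hmul := mul_le_mul_of_nonneg_left hc hT.le
  have e1 : (t₁ + t₂) * ((x₁ + x₂) / (t₁ + t₂) * Real.log ((x₁ + x₂) / (t₁ + t₂)))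
      = (x₁ + x₂) * Real.log ((x₁ + x₂) / (t₁ + t₂)) := by field_simp
  have e2 : (t₁ + t₂) * (t₁ / (t₁ + t₂) * (x₁ / t₁ * Real.log (x₁ / t₁))
        + t₂ / (t₁ + t₂) * (x₂ / t₂ * Real.log (x₂ / t₂)))
      = x₁ * Real.log (x₁ / t₁) + x₂ * Real.log (x₂ / t₂) := by field_simp
  rw [e1, e2] at hmul
  have k1 : x₁ * Real.log (t₁ / x₁) = -(x₁ * Real.log (x₁ / t₁)) := by
    rw [← inv_div x₁ t₁, Real.log_inv]; ring
  have k2 : x₂ * Real.log (t₂ / x₂) = -(x₂ * Real.log (x₂ / t₂)) := by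
    rw [← inv_div x₂ t₂, Real.log_inv]; ring
  have k3 : (x₁ + x₂) * Real.log ((t₁ + t₂) / (x₁ + x₂))
      = -((x₁ + x₂) * Real.log ((x₁ + x₂) / (t₁ + t₂))) := by
    rw [← inv_div (x₁ + x₂) (t₁ + t₂), Real.log_inv]; ring
  rw [k1, k2, k3]
  linarith

/-- `entf x t = x·ln(t/x) + (t−x)·ln(t/(t−x))`, the unnormalized entropy in nats. -/
noncomputable def entf (x t : ℝ) : ℝ :=
  x * Real.log (t / x) + (t - x) * Real.log (t / (t - x))

lemma entf_superadd {x₁ t₁ x₂ t₂ : ℝ} (h0 : 0 ≤ x₁) (h1 : x₁ ≤ t₁) (h2 : 0 ≤ x₂)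
    (h3 : x₂ ≤ t₂) : entf x₁ t₁ + entf x₂ t₂ ≤ entf (x₁ + x₂) (t₁ + t₂) := by
  have A := logsum h0 h1 h2 h3
  have B := logsum (x₁ := t₁ - x₁) (x₂ := t₂ - x₂) (t₁ := t₁) (t₂ := t₂)
    (by linarith) (by linarith) (by linarith) (by linarith)
  have hx : t₁ - x₁ + (t₂ - x₂) = t₁ + t₂ - (x₁ + x₂) := by ring
  rw [hx] at B
  unfold entf
  linarith

lemma entf_nonneg {x t : ℝ} (h0 : 0 ≤ x) (h1 : x ≤ t) : 0 ≤ entf x t := by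
  have term : ∀ y : ℝ, 0 ≤ y → y ≤ t → 0 ≤ y * Real.log (t / y) := by
    intro y hy hyt
    rcases eq_or_lt_of_le hy with h | h
    · simp [← h]
    · exact mul_nonneg hy (Real.log_nonneg ((one_le_div h).mpr hyt))
  have := term x h0 h1
  have := term (t - x) (by linarith) (by linarith)
  unfold entf; linarith

lemma entf_le {x t : ℝ} (h0 : 0 ≤ x) (h1 : x ≤ t) : entf x t ≤ t * Real.log 2 := by
  have ht : 0 ≤ t := h0.trans h1
  rcases eq_or_lt_of_le ht with ht0 | ht0
  · have hx : x = 0 := le_antisymm (h1.trans ht0.symm.le) h0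
    subst hx; rw [← ht0]; simp [entf]
  rcases eq_or_lt_of_le h0 with hx0 | hx0
  · rw [← hx0]
    simp [entf, div_self ht0.ne']
    positivity
  rcases eq_or_lt_of_le h1 with hx1 | hx1
  · rw [hx1]
    simp [entf, div_self ht0.ne']
    positivity
  -- 0 < x < t : use concavity of log
  have hxt : 0 < t - x := by linarith
  have hc := (strictConcaveOn_log_Ioi.concaveOn).2
      (Set.mem_Ioi.mpr (div_pos ht0 hx0))
      (Set.mem_Ioi.mpr (div_pos ht0 hxt))
      (div_nonneg h0 ht0.le) (div_nonneg hxt.le ht0.le)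
      (by field_simp; ring)
  simp only [smul_eq_mul] at hc
  have hpt : x / t * (t / x) + (t - x) / t * (t / (t - x)) = 2 := by
    field_simp
    norm_num
  rw [hpt] at hc
  have hmul := mul_le_mul_of_nonneg_left hc ht0.le
  have e1 : t * (x / t * Real.log (t / x) + (t - x) / t * Real.log (t / (t - x)))
      = entf x t := by unfold entf; field_simp
  rw [e1] at hmul
  exact hmul


/-- The unnormalized entropy `|Y|·H₀(Y)`. -/
noncomputable def entL (Y : List Bool) : ℝ := (Y.length : ℝ) * binH0 Y

lemma entL_eq (Y : List Bool) :
    entL Y = entf (Y.count true) (Y.length) / Real.log 2 := by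
  have hl2 : Real.log 2 ≠ 0 := (Real.log_pos one_lt_two).ne'
  by_cases ht : Y = []
  · subst ht; simp [entL, binH0, entf]
  · have ht' : ((Y.length : ℝ)) ≠ 0 := by
      exact_mod_cast fun h => ht (List.length_eq_zero_iff.mp (by exact_mod_cast h))
    unfold entL binH0 entf Real.logb
    field_simp

lemma count_le_len (Y : List Bool) : ((Y.count true : ℝ)) ≤ (Y.length : ℝ) := by
  exact_mod_cast (List.count_le_length (a := true) (l := Y))

lemma entL_nonneg (Y : List Bool) : 0 ≤ entL Y := by
  rw [entL_eq]
  exact div_nonneg (entf_nonneg (by positivity) (count_le_len Y))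
    (Real.log_nonneg one_le_two)

lemma entL_le (Y : List Bool) : entL Y ≤ (Y.length : ℝ) := by
  rw [entL_eq, div_le_iff₀ (Real.log_pos one_lt_two)]
  exact entf_le (by positivity) (count_le_len Y)

lemma entL_append (A B : List Bool) : entL A + entL B ≤ entL (A ++ B) := by
  rw [entL_eq, entL_eq, entL_eq]
  have hc : (((A ++ B).count true : ℝ)) = (A.count true : ℝ) + (B.count true : ℝ) := by
    push_cast [List.count_append]; ring
  have hl : (((A ++ B).length : ℝ)) = (A.length : ℝ) + (B.length : ℝ) := by
    push_cast [List.length_append]; ring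
  rw [hc, hl, ← add_div, div_le_div_iff_of_pos_right (Real.log_pos one_lt_two)]
  exact entf_superadd (by positivity) (count_le_len A) (by positivity) (count_le_len B)

lemma sum_le_entL_flatten : ∀ L : List (List Bool), (L.map entL).sum ≤ entL L.flatten
  | [] => by simp [entL]
  | B :: L => by
      simp only [List.map_cons, List.sum_cons, List.flatten_cons]
      calc entL B + (L.map entL).sum ≤ entL B + entL L.flatten := by
            linarith [sum_le_entL_flatten L]
        _ ≤ entL (B ++ L.flatten) := entL_append _ _

lemma sum_entL_nonneg (L : List (List Bool)) : 0 ≤ (L.map entL).sum := by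
  apply List.sum_nonneg
  intro x hx
  obtain ⟨B, _, rfl⟩ := List.mem_map.mp hx
  exact entL_nonneg B

lemma splitQ (b : ℕ) : ∀ (Q : List (List Bool)) (n : ℕ), (∀ B ∈ Q, B.length ≤ b) →
    ∃ Q₁ Q₂ : List (List Bool), Q₁.flatten = Q.flatten.take n ∧
      Q₂.flatten = Q.flatten.drop n ∧
      (∀ B ∈ Q₁, B.length ≤ b) ∧ (∀ B ∈ Q₂, B.length ≤ b) ∧
      (Q.map entL).sum ≤ (Q₁.map entL).sum + (Q₂.map entL).sum + (b : ℝ) := by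
  intro Q
  induction Q with
  | nil =>
    intro n _
    exact ⟨[], [], by simp, by simp, by simp, by simp, by simp⟩
  | cons B Q' ih =>
    intro n hb
    have hB : B.length ≤ b := hb B (by simp)
    have hb' : ∀ C ∈ Q', C.length ≤ b := fun C h => hb C (by simp [h])
    by_cases h : B.length ≤ n
    · obtain ⟨Q₁, Q₂, h1, h2, h3, h4, h5⟩ := ih (n - B.length) hb'
      refine ⟨B :: Q₁, Q₂, ?_, ?_, ?_, h4, ?_⟩
      · rw [List.flatten_cons, List.flatten_cons, h1,
          List.take_append, List.take_of_length_le h]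
      · rw [List.flatten_cons, h2, List.drop_append,
          List.drop_eq_nil_of_le h, List.nil_append]
      · intro C hC
        rcases List.mem_cons.mp hC with rfl | hC
        · exact hB
        · exact h3 C hC
      · simp only [List.map_cons, List.sum_cons]
        linarith
    · refine ⟨[B.take n], B.drop n :: Q', ?_, ?_, ?_, ?_, ?_⟩
      · rw [List.flatten_cons]
        simp [List.take_append_of_le_length (le_of_not_ge h)]
      · rw [List.flatten_cons, List.flatten_cons,
          List.drop_append_of_le_length (le_of_not_ge h)]
      · intro C hC
        simp only [List.mem_singleton] at hC
        subst hC
        exact le_trans (by simp) hB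
      · intro C hC
        rcases List.mem_cons.mp hC with rfl | hC
        · exact le_trans (by simp) hB
        · exact hb' C hC
      · simp only [List.map_cons, List.sum_cons, List.map_nil, List.sum_nil]
        have h1 := entL_le B
        have h2 := entL_nonneg (B.take n)
        have h3 := entL_nonneg (B.drop n)
        have h4 : ((B.length : ℝ)) ≤ (b : ℝ) := by exact_mod_cast hB
        linarith

lemma main_aux (b : ℕ) : ∀ (P Q : List (List Bool)), Q.flatten = P.flatten →
    (∀ B ∈ Q, B.length ≤ b) →
    (Q.map entL).sum ≤ (P.map entL).sum + ((P.length - 1 : ℕ) : ℝ) * (b : ℝ) := by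
  intro P
  induction P with
  | nil =>
    intro Q hQ _
    simp only [List.flatten_nil] at hQ
    have hall := List.flatten_eq_nil_iff.mp hQ
    have hs : (Q.map entL).sum = 0 := by
      apply List.sum_eq_zero
      intro x hx
      obtain ⟨B, hB, rfl⟩ := List.mem_map.mp hx
      rw [hall B hB]
      simp [entL]
    simp [hs]
  | cons A P' ih =>
    intro Q hQ hb
    cases P' with
    | nil =>
      have h := sum_le_entL_flatten Q
      rw [hQ] at h
      simp only [List.map_cons, List.map_nil, List.sum_cons, List.sum_nil,
        List.length_cons, List.length_nil]
      norm_num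
      simp [entL] at h ⊢
      exact h
    | cons A' P'' =>
      obtain ⟨Q₁, Q₂, h1, h2, h3, h4, h5⟩ := splitQ b Q A.length hb
      rw [hQ, List.flatten_cons] at h1 h2
      rw [List.take_left] at h1
      rw [List.drop_left] at h2
      have hQ1 : (Q₁.map entL).sum ≤ entL A := by
        have := sum_le_entL_flatten Q₁
        rwa [h1] at this
      have hQ2 := ih Q₂ h2 h4
      have harith : (((A' :: P'').length - 1 : ℕ) : ℝ) * (b : ℝ) + (b : ℝ)
          = (((A :: A' :: P'').length - 1 : ℕ) : ℝ) * (b : ℝ) := by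
        simp only [List.length_cons]
        push_cast
        ring
      simp only [List.map_cons, List.sum_cons] at hQ2 ⊢
      linarith [hQ1, hQ2, h5, harith.le, harith.ge]

end BinH0Aux

/-- Let `X = X_1 ⋯ X_ℓ` be an arbitrary partition of a binary string `X` into
`ℓ` consecutive blocks, and let `X = X^b_1 ⋯ X^b_m` be a partition of `X` into
blocks of length at most `b`.  Then
`∑ᵢ |X^b_i|·H₀(X^b_i) ≤ ∑ᵢ |X_i|·H₀(X_i) + (ℓ − 1)·b`. -/
theorem stmt15 (b : ℕ) (X : List Bool) (P Q : List (List Bool))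
    (hP : P.flatten = X) (hQ : Q.flatten = X)
    (hb : ∀ B ∈ Q, B.length ≤ b) :
    (Q.map fun B => (B.length : ℝ) * binH0 B).sum ≤
      (P.map fun B => (B.length : ℝ) * binH0 B).sum +
        ((P.length - 1 : ℕ) : ℝ) * (b : ℝ) := by
  have := BinH0Aux.main_aux b P Q (hQ.trans hP.symm) hb
  exact this
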